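/- Let B, C, D be unital complex Banach algebras and let φ : B → D, ψ : C → D be continuous unital algebra homomorphisms such that every element d ∈ D can be written d = φ(b) + ψ(c) with b ∈ B, c ∈ C. Then the map π : Bˣ × Cˣ → Dˣ, π(S,T) = φ(S)⁻¹ · ψ(T), has a continuous local right inverse defined in a neighborhood of the identity: there are an open neighborhood U of 1 in Dˣ and a continuous map σ : U → Bˣ × Cˣ such that π(σ(R)) = R for all R ∈ U. -/

import Mathlib

open Metric Set Function Filter Topology

lemma approx_section {E F : Type*} [NormedAddCommGroup E] [NormedSpace ℝ E]
    [NormedAddCommGroup F] [NormedSpace ℝ F]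
    (θ : E →L[ℝ] F) (Cb : ℝ) (hCb : 0 ≤ Cb)
    (h : ∀ y : F, ∃ x : E, θ x = y ∧ ‖x‖ ≤ Cb * ‖y‖) {ε : ℝ} (hε : 0 < ε) :
    ∃ u : F → E, Continuous u ∧ ∀ y, ‖θ (u y) - y‖ ≤ ε ∧ ‖u y‖ ≤ Cb * (‖y‖ + ε) := by
  choose x hx hxn using h
  obtain ⟨f, hf⟩ := PartitionOfUnity.exists_isSubordinate (ι := F) (X := F) (s := univ)
    isClosed_univ (fun z => ball z ε) (fun z => isOpen_ball)
    (fun y _ => mem_iUnion.2 ⟨y, mem_ball_self hε⟩)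
  refine ⟨fun y => ∑ᶠ z, f z y • x z, ?_, fun y => ?_⟩
  · exact hf.continuous_finsum_smul (fun z => isOpen_ball)
      (fun z => continuousOn_const)
  · have hfin : (support fun z => f z y • x z) ⊆ ↑(f.finsupport y) := by
      intro z hz
      simp only [Finset.mem_coe, PartitionOfUnity.mem_finsupport, mem_support]
      exact fun h0 => hz (by simp [h0])
    have hsum : (∑ᶠ z, f z y • x z) = ∑ z ∈ f.finsupport y, f z y • x z :=
      finsum_eq_sum_of_support_subset _ hfin
    have hone : ∑ z ∈ f.finsupport y, f z y = 1 := f.sum_finsupport (mem_univ y)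
    have hball : ∀ z ∈ f.finsupport y, dist y z < ε := by
      intro z hz
      have : y ∈ support (f z) := (f.mem_finsupport y).1 hz
      exact mem_ball.1 (hf z (subset_closure this))
    constructor
    · have key : θ (∑ z ∈ f.finsupport y, f z y • x z) - y
          = ∑ z ∈ f.finsupport y, f z y • (z - y) := by
        simp only [smul_sub]
        rw [Finset.sum_sub_distrib, ← Finset.sum_smul, hone, one_smul, map_sum]
        congr 1
        refine Finset.sum_congr rfl fun z _ => ?_
        rw [map_smul, hx]
      simp only [hsum, key]
      calc ‖∑ z ∈ f.finsupport y, f z y • (z - y)‖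
          ≤ ∑ z ∈ f.finsupport y, f z y * ε := by
            refine (norm_sum_le _ _).trans (Finset.sum_le_sum fun z hz => ?_)
            rw [norm_smul, Real.norm_of_nonneg (f.nonneg z y)]
            refine mul_le_mul_of_nonneg_left ?_ (f.nonneg z y)
            rw [← dist_eq_norm, dist_comm]
            exact (hball z hz).le
        _ = ε := by rw [← Finset.sum_mul, hone, one_mul]
    · simp only [hsum]
      calc ‖∑ z ∈ f.finsupport y, f z y • x z‖
          ≤ ∑ z ∈ f.finsupport y, f z y * (Cb * (‖y‖ + ε)) := by
            refine (norm_sum_le _ _).trans (Finset.sum_le_sum fun z hz => ?_)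
            rw [norm_smul, Real.norm_of_nonneg (f.nonneg z y)]
            refine mul_le_mul_of_nonneg_left ((hxn z).trans ?_) (f.nonneg z y)
            refine mul_le_mul_of_nonneg_left ?_ hCb
            calc ‖z‖ ≤ ‖y‖ + ‖z - y‖ := by
                  simpa [add_comm] using norm_add_le (z - y) y |>.trans_eq (by ring_nf) |>.trans (le_refl _)
              _ ≤ ‖y‖ + ε := by
                  have := hball z hz
                  rw [dist_comm, dist_eq_norm] at this
                  linarith
        _ = Cb * (‖y‖ + ε) := by rw [← Finset.sum_mul, hone, one_mul]

set_option maxHeartbeats 1000000 in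
/-- **Local right inverse for the double-coset map on invertibles.** Let `B, C, D` be
unital complex Banach algebras and `φ : B → D`, `ψ : C → D` continuous unital algebra
homomorphisms with `φ[B] + ψ[C] = D`. Then the map `π : Bˣ × Cˣ → Dˣ`,
`π (S, T) = φ(S)⁻¹ * ψ(T)`, has a continuous local right inverse defined in a
neighborhood of the identity of `Dˣ`. -/
theorem local_section_of_units_map
    {B C D : Type*} [NormedRing B] [NormedAlgebra ℂ B] [CompleteSpace B]
    [NormedRing C] [NormedAlgebra ℂ C] [CompleteSpace C]
    [NormedRing D] [NormedAlgebra ℂ D] [CompleteSpace D]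
    (φ : B →ₐ[ℂ] D) (hφ : Continuous φ)
    (ψ : C →ₐ[ℂ] D) (hψ : Continuous ψ)
    (hsum : ∀ d : D, ∃ b : B, ∃ c : C, d = φ b + ψ c) :
    ∃ U : Set Dˣ, IsOpen U ∧ (1 : Dˣ) ∈ U ∧
      ∃ σ : Dˣ → Bˣ × Cˣ, ContinuousOn σ U ∧
        ∀ R ∈ U,
          (Units.map φ.toRingHom.toMonoidHom (σ R).1)⁻¹ *
            Units.map ψ.toRingHom.toMonoidHom (σ R).2 = R := by
  classical
  let Lφ : B →L[ℝ] D := ⟨φ.toLinearMap.restrictScalars ℝ, hφ⟩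
  let Lψ : C →L[ℝ] D := ⟨ψ.toLinearMap.restrictScalars ℝ, hψ⟩
  let θ : (B × C) →L[ℝ] D := Lφ.comp (ContinuousLinearMap.fst ℝ B C) -
    Lψ.comp (ContinuousLinearMap.snd ℝ B C)
  have hθ : ∀ p : B × C, θ p = φ p.1 - ψ p.2 := fun p => rfl
  have hθsurj : LinearMap.range (θ : (B × C) →ₗ[ℝ] D) = ⊤ := by
    rw [LinearMap.range_eq_top]
    intro d
    obtain ⟨b, c, hd⟩ := hsum d
    refine ⟨(b, -c), ?_⟩
    rw [ContinuousLinearMap.coe_coe, hθ]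
    simp [hd, sub_neg_eq_add]
  obtain ⟨fs, -⟩ := θ.exists_nonlinearRightInverse_of_surjective hθsurj
  obtain ⟨Cb, hCb1, hsec⟩ : ∃ Cb : ℝ, 1 ≤ Cb ∧
      ∀ y, ∃ x : B × C, θ x = y ∧ ‖x‖ ≤ Cb * ‖y‖ :=
    ⟨(fs.nnnorm : ℝ) + 1, le_add_of_nonneg_left fs.nnnorm.coe_nonneg, fun y =>
      ⟨fs y, fs.right_inv y, (fs.bound y).trans
        (mul_le_mul_of_nonneg_right (by simp) (norm_nonneg y))⟩⟩
  have hCb0 : 0 ≤ Cb := zero_le_one.trans hCb1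
  obtain ⟨K, hK1, hKφ, hKψ⟩ : ∃ K : ℝ, 1 ≤ K ∧ (∀ b : B, ‖φ b‖ ≤ K * ‖b‖) ∧
      (∀ c : C, ‖ψ c‖ ≤ K * ‖c‖) := by
    refine ⟨max ‖Lφ‖ ‖Lψ‖ + 1, le_add_of_nonneg_left (le_max_iff.2 (Or.inl (norm_nonneg _))),
      fun b => (Lφ.le_opNorm b).trans (mul_le_mul_of_nonneg_right
        (by nlinarith [le_max_left ‖Lφ‖ ‖Lψ‖]) (norm_nonneg b)),
      fun c => (Lψ.le_opNorm c).trans (mul_le_mul_of_nonneg_right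
        (by nlinarith [le_max_right ‖Lφ‖ ‖Lψ‖]) (norm_nonneg c))⟩
  have hK0 : (0:ℝ) < K := lt_of_lt_of_le one_pos hK1
  obtain ⟨N, hN1, hNval, hNB, hNC⟩ : ∃ N : ℝ, 1 ≤ N ∧ ‖(1:D)‖ ≤ N ∧ ‖(1:B)‖ ≤ N ∧ ‖(1:C)‖ ≤ N :=
    ⟨max (max ‖(1:D)‖ 1) (max ‖(1:B)‖ ‖(1:C)‖),
      le_max_of_le_left (le_max_right _ _),
      le_max_of_le_left (le_max_left _ _),
      le_max_of_le_right (le_max_left _ _),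
      le_max_of_le_right (le_max_right _ _)⟩
  have hN0 : (0:ℝ) < N := lt_of_lt_of_le one_pos hN1
  obtain ⟨δ, hδpos, hδ16, hKCδ⟩ : ∃ δ : ℝ, 0 < δ ∧ δ ≤ 1/16 ∧ K * Cb * δ ≤ 1/(32*N) := by
    have hKCb : (1:ℝ) ≤ K * Cb := by nlinarith
    have hKCbN : (1:ℝ) ≤ K * Cb * N := by nlinarith
    refine ⟨1 / (32 * K * Cb * N), by positivity, ?_, ?_⟩
    · rw [div_le_div_iff₀ (by positivity) (by norm_num)]
      nlinarith
    · rw [mul_div_assoc', div_le_div_iff₀ (by positivity) (by positivity)]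
      nlinarith
  -- the approximate sections
  have hu : ∀ n : ℕ, ∃ u : D → B × C, Continuous u ∧
      ∀ y, ‖θ (u y) - y‖ ≤ δ * (1/2)^n / (8*N) ∧ ‖u y‖ ≤ Cb * (‖y‖ + δ * (1/2)^n / (8*N)) :=
    fun n => approx_section θ Cb hCb0 hsec (by positivity)
  choose u hucont huspec using hu
  -- the iteration
  obtain ⟨ρ, hρ0, hρs⟩ : ∃ ρ : ℕ → D → D, (∀ R, ρ 0 R = R) ∧
      (∀ n R, ρ (n+1) R = (1 + φ (u n (1 - ρ n R)).1) * ρ n R *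
        Ring.inverse (1 + ψ (u n (1 - ρ n R)).2)) :=
    ⟨fun n => Nat.rec id (fun n ρn R =>
      (1 + φ (u n (1 - ρn R)).1) * ρn R * Ring.inverse (1 + ψ (u n (1 - ρn R)).2)) n,
      fun _ => rfl, fun _ _ => rfl⟩
  obtain ⟨P, hP0, hPs⟩ : ∃ P : ℕ → D → B, (∀ R, P 0 R = 1) ∧
      (∀ n R, P (n+1) R = (1 + (u n (1 - ρ n R)).1) * P n R) :=
    ⟨fun n => Nat.rec (fun _ => 1) (fun n Pn R => (1 + (u n (1 - ρ n R)).1) * Pn R) n,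
      fun _ => rfl, fun _ _ => rfl⟩
  obtain ⟨Q, hQ0, hQs⟩ : ∃ Q : ℕ → D → C, (∀ R, Q 0 R = 1) ∧
      (∀ n R, Q (n+1) R = (1 + (u n (1 - ρ n R)).2) * Q n R) :=
    ⟨fun n => Nat.rec (fun _ => 1) (fun n Qn R => (1 + (u n (1 - ρ n R)).2) * Qn R) n,
      fun _ => rfl, fun _ _ => rfl⟩
  -- key one-step estimate
  have hstep : ∀ n (R : D), ‖ρ n R - 1‖ ≤ δ * (1/2)^n →
      ‖(u n (1 - ρ n R)).1‖ ≤ 2*Cb*(δ*(1/2)^n) ∧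
      ‖(u n (1 - ρ n R)).2‖ ≤ 2*Cb*(δ*(1/2)^n) ∧
      (∃ w : Dˣ, (w : D) = 1 + ψ (u n (1 - ρ n R)).2 ∧ ‖((w⁻¹ : Dˣ) : D)‖ ≤ 2*N) ∧
      ‖ρ (n+1) R - 1‖ ≤ δ * (1/2)^(n+1) := by
    intro n R hA
    have hq0 : (0:ℝ) ≤ (1/2)^n := by positivity
    have hq1 : ((1:ℝ)/2)^n ≤ 1 := pow_le_one₀ (by norm_num) (by norm_num)
    set η : ℝ := δ * (1/2)^n with hηdef
    have hηpos : 0 < η := by positivity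
    have hηδ : η ≤ δ := by
      rw [hηdef]
      nlinarith
    set y : D := 1 - ρ n R with hydef
    have hy : ‖y‖ ≤ η := by rw [hydef, norm_sub_rev]; exact hA
    obtain ⟨hu1, hu2⟩ := huspec n y
    set p : B × C := u n y with hpdef
    have hpn : ‖p‖ ≤ 2 * Cb * η := by
      have h8 : δ * (1/2)^n / (8*N) ≤ η := by
        rw [hηdef, div_le_iff₀ (by positivity)]
        nlinarith
      calc ‖p‖ ≤ Cb * (‖y‖ + δ * (1/2)^n / (8*N)) := hu2
        _ ≤ Cb * (η + η) := by
            refine mul_le_mul_of_nonneg_left (add_le_add hy h8) hCb0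
        _ = 2 * Cb * η := by ring
    have hb : ‖p.1‖ ≤ 2*Cb*η := (norm_fst_le p).trans hpn
    have hc : ‖p.2‖ ≤ 2*Cb*η := (norm_snd_le p).trans hpn
    have hKCη : K * (2*Cb*η) ≤ 1/(16*N) := by
      have : K * (2*Cb*η) ≤ 2 * (K*Cb*δ) := by
        rw [hηdef]
        nlinarith [mul_nonneg (mul_nonneg (mul_nonneg hK0.le hCb0) hδpos.le)
          (sub_nonneg.2 hq1)]
      calc K * (2*Cb*η) ≤ 2 * (K*Cb*δ) := this
        _ ≤ 2 * (1/(32*N)) := by linarith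
        _ = 1/(16*N) := by field_simp; ring
    have hβ : ‖φ p.1‖ ≤ 1/(16*N) :=
      ((hKφ p.1).trans (mul_le_mul_of_nonneg_left hb hK0.le)).trans hKCη
    have hγ : ‖ψ p.2‖ ≤ 1/(16*N) :=
      ((hKψ p.2).trans (mul_le_mul_of_nonneg_left hc hK0.le)).trans hKCη
    have hN16 : 1/(16*N) ≤ 1/16 := by
      rw [div_le_div_iff₀ (by positivity) (by norm_num)]
      nlinarith
    have hγ1 : ‖-(ψ p.2)‖ < 1 := by
      rw [norm_neg]; linarith
    set w : Dˣ := Units.oneSub (-(ψ p.2)) hγ1 with hwdef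
    have hwval : (w : D) = 1 + ψ p.2 := by
      rw [hwdef, Units.val_oneSub, sub_neg_eq_add]
    have hwinv : ‖((w⁻¹ : Dˣ) : D)‖ ≤ 2*N := by
      have hid : ((w⁻¹ : Dˣ) : D) = 1 - ψ p.2 * ((w⁻¹ : Dˣ) : D) := by
        have h2 : (w : D) * ((w⁻¹ : Dˣ) : D) = 1 := by
          rw [← Units.val_mul, mul_inv_cancel, Units.val_one]
        rw [hwval] at h2
        rw [add_mul, one_mul] at h2
        exact (eq_sub_of_add_eq h2)
      have hle : ‖((w⁻¹ : Dˣ) : D)‖ ≤ N + (1/(16*N)) * ‖((w⁻¹ : Dˣ) : D)‖ := by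
        calc ‖((w⁻¹ : Dˣ) : D)‖ = ‖(1:D) - ψ p.2 * ((w⁻¹ : Dˣ) : D)‖ := by rw [← hid]
          _ ≤ ‖(1:D)‖ + ‖ψ p.2 * ((w⁻¹ : Dˣ) : D)‖ := norm_sub_le _ _
          _ ≤ N + (1/(16*N)) * ‖((w⁻¹ : Dˣ) : D)‖ := by
              refine add_le_add hNval ((norm_mul_le _ _).trans ?_)
              exact mul_le_mul_of_nonneg_right hγ (norm_nonneg _)
      have h16 : (1/(16*N)) * ‖((w⁻¹ : Dˣ) : D)‖ ≤ (1/16) * ‖((w⁻¹ : Dˣ) : D)‖ :=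
        mul_le_mul_of_nonneg_right hN16 (norm_nonneg _)
      nlinarith [norm_nonneg ((w⁻¹ : Dˣ) : D)]
    refine ⟨hb, hc, ⟨w, hwval, hwinv⟩, ?_⟩
    -- the contraction estimate
    have herr : ‖(φ p.1 - ψ p.2) - y‖ ≤ η / (8*N) := by
      have := hu1
      rw [hθ p] at this
      calc ‖(φ p.1 - ψ p.2) - y‖ ≤ δ * (1/2)^n / (8*N) := this
        _ = η / (8*N) := by rw [hηdef]
    have hρval : ρ (n+1) R = (1 + φ p.1) * ρ n R * ((w⁻¹ : Dˣ) : D) := by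
      rw [hρs n R, ← hydef, ← hpdef]
      congr 1
      rw [← hwval, ← Ring.inverse_unit w, hwval]
    have hfact : ρ (n+1) R - 1 = (((φ p.1 - ψ p.2) - y) + φ p.1 * (ρ n R - 1)) * ((w⁻¹ : Dˣ) : D) := by
      have h1 : (1 : D) = ((w : D)) * ((w⁻¹ : Dˣ) : D) := by
        rw [← Units.val_mul, mul_inv_cancel, Units.val_one]
      rw [hρval]
      nth_rewrite 2 [h1]
      rw [← sub_mul]
      congr 1
      rw [hwval, hydef]
      noncomm_ring
    rw [hfact]
    calc ‖(((φ p.1 - ψ p.2) - y) + φ p.1 * (ρ n R - 1)) * ((w⁻¹ : Dˣ) : D)‖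
        ≤ (‖(φ p.1 - ψ p.2) - y‖ + ‖φ p.1‖ * ‖ρ n R - 1‖) * ‖((w⁻¹ : Dˣ) : D)‖ := by
          refine (norm_mul_le _ _).trans ?_
          refine mul_le_mul_of_nonneg_right ((norm_add_le _ _).trans ?_) (norm_nonneg _)
          exact add_le_add le_rfl (norm_mul_le _ _)
      _ ≤ (η/(8*N) + (1/(16*N)) * η) * (2*N) := by
          refine mul_le_mul ?_ hwinv (norm_nonneg _) (by positivity)
          refine add_le_add herr ?_
          exact mul_le_mul hβ hA (norm_nonneg _) (by positivity)
      _ = η * (3/8) := by field_simp; ring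
      _ ≤ δ * (1/2)^(n+1) := by
          rw [hηdef, pow_succ]
          nlinarith
  have hCbδ : Cb*δ ≤ 1/(32*N) := by
    calc Cb*δ ≤ K*(Cb*δ) := le_mul_of_one_le_left (by positivity) hK1
      _ = K*Cb*δ := by ring
      _ ≤ 1/(32*N) := hKCδ
  have hCbNδ : Cb*N*δ ≤ 1/32 := by
    calc Cb*N*δ = Cb*δ*N := by ring
      _ ≤ (1/(32*N))*N := mul_le_mul_of_nonneg_right hCbδ hN0.le
      _ = 1/32 := by field_simp
  have h6 : 6*Cb*N*δ ≤ 1/2 := by nlinarith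
  -- the main induction
  have main : ∀ n (R : D), ‖R - 1‖ < δ →
      ‖ρ n R - 1‖ ≤ δ*(1/2)^n ∧ ρ n R * ψ (Q n R) = φ (P n R) * R ∧
      ‖P n R - 1‖ ≤ 6*Cb*N*δ*(1-(1/2)^n) ∧ ‖Q n R - 1‖ ≤ 6*Cb*N*δ*(1-(1/2)^n) := by
    intro n
    induction n with
    | zero =>
      intro R hR
      refine ⟨by simpa [hρ0] using hR.le, ?_, ?_, ?_⟩
      · rw [hρ0, hQ0, hP0, map_one, map_one, mul_one, one_mul]
      · simp [hP0]
      · simp [hQ0]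
    | succ n ih =>
      intro R hR
      obtain ⟨hA, hInv, hPb, hQb⟩ := ih R hR
      obtain ⟨hb, hc, ⟨w, hwval, hwinv⟩, hA'⟩ := hstep n R hA
      have hρval : ρ (n+1) R = (1 + φ (u n (1 - ρ n R)).1) * ρ n R * ((w⁻¹ : Dˣ) : D) := by
        rw [hρs]
        congr 1
        rw [← hwval, Ring.inverse_unit]
      have hψQ : ψ (Q (n+1) R) = (w : D) * ψ (Q n R) := by
        rw [hQs, map_mul, map_add, map_one, hwval]
      have hinvw : ((w⁻¹ : Dˣ) : D) * (w : D) = 1 := by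
        rw [← Units.val_mul, inv_mul_cancel, Units.val_one]
      have hq0' : (0:ℝ) ≤ (1/2)^n := by positivity
      have hq1' : ((1:ℝ)/2)^n ≤ 1 := pow_le_one₀ (by norm_num) (by norm_num)
      refine ⟨hA', ?_, ?_, ?_⟩
      · calc ρ (n+1) R * ψ (Q (n+1) R)
            = (1 + φ (u n (1 - ρ n R)).1) * ρ n R *
              (((w⁻¹ : Dˣ) : D) * ((w : D) * ψ (Q n R))) := by
              rw [hρval, hψQ, mul_assoc]
          _ = (1 + φ (u n (1 - ρ n R)).1) * ρ n R * ψ (Q n R) := by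
              rw [← mul_assoc ((w⁻¹ : Dˣ) : D), hinvw, one_mul]
          _ = (1 + φ (u n (1 - ρ n R)).1) * (ρ n R * ψ (Q n R)) := by rw [mul_assoc]
          _ = (1 + φ (u n (1 - ρ n R)).1) * (φ (P n R) * R) := by rw [hInv]
          _ = ((1 + φ (u n (1 - ρ n R)).1) * φ (P n R)) * R := by rw [mul_assoc]
          _ = φ (P (n+1) R) * R := by rw [hPs, map_mul, map_add, map_one]
      · have hPnorm : ‖P n R‖ ≤ (3/2)*N := by
          calc ‖P n R‖ = ‖(1:B) + (P n R - 1)‖ := by rw [add_sub_cancel]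
            _ ≤ ‖(1:B)‖ + ‖P n R - 1‖ := norm_add_le _ _
            _ ≤ N + 6*Cb*N*δ*(1-(1/2)^n) := add_le_add hNB hPb
            _ ≤ (3/2)*N := by nlinarith [mul_nonneg (mul_nonneg (mul_nonneg
                (by positivity : (0:ℝ) ≤ 6*Cb) hN0.le) hδpos.le) (sub_nonneg.2 hq1')]
        have key : ‖P (n+1) R - 1‖ ≤ ‖P n R - 1‖ + ‖(u n (1 - ρ n R)).1‖ * ‖P n R‖ := by
          rw [hPs]
          have he : (1 + (u n (1 - ρ n R)).1) * P n R - 1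
              = (P n R - 1) + (u n (1 - ρ n R)).1 * P n R := by noncomm_ring
          rw [he]
          exact (norm_add_le _ _).trans (add_le_add le_rfl (norm_mul_le _ _))
        calc ‖P (n+1) R - 1‖ ≤ ‖P n R - 1‖ + ‖(u n (1 - ρ n R)).1‖ * ‖P n R‖ := key
          _ ≤ 6*Cb*N*δ*(1-(1/2)^n) + (2*Cb*(δ*(1/2)^n))*((3/2)*N) :=
              add_le_add hPb (mul_le_mul hb hPnorm (norm_nonneg _) (by positivity))
          _ = 6*Cb*N*δ*(1-(1/2)^n*(1/2)) := by ring
          _ = 6*Cb*N*δ*(1-(1/2)^(n+1)) := by rw [pow_succ]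
      · have hQnorm : ‖Q n R‖ ≤ (3/2)*N := by
          calc ‖Q n R‖ = ‖(1:C) + (Q n R - 1)‖ := by rw [add_sub_cancel]
            _ ≤ ‖(1:C)‖ + ‖Q n R - 1‖ := norm_add_le _ _
            _ ≤ N + 6*Cb*N*δ*(1-(1/2)^n) := add_le_add hNC hQb
            _ ≤ (3/2)*N := by nlinarith [mul_nonneg (mul_nonneg (mul_nonneg
                (by positivity : (0:ℝ) ≤ 6*Cb) hN0.le) hδpos.le) (sub_nonneg.2 hq1')]
        have key : ‖Q (n+1) R - 1‖ ≤ ‖Q n R - 1‖ + ‖(u n (1 - ρ n R)).2‖ * ‖Q n R‖ := by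
          rw [hQs]
          have he : (1 + (u n (1 - ρ n R)).2) * Q n R - 1
              = (Q n R - 1) + (u n (1 - ρ n R)).2 * Q n R := by noncomm_ring
          rw [he]
          exact (norm_add_le _ _).trans (add_le_add le_rfl (norm_mul_le _ _))
        calc ‖Q (n+1) R - 1‖ ≤ ‖Q n R - 1‖ + ‖(u n (1 - ρ n R)).2‖ * ‖Q n R‖ := key
          _ ≤ 6*Cb*N*δ*(1-(1/2)^n) + (2*Cb*(δ*(1/2)^n))*((3/2)*N) :=
              add_le_add hQb (mul_le_mul hc hQnorm (norm_nonneg _) (by positivity))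
          _ = 6*Cb*N*δ*(1-(1/2)^n*(1/2)) := by ring
          _ = 6*Cb*N*δ*(1-(1/2)^(n+1)) := by rw [pow_succ]
  -- the good open set in D
  set V : Set D := {R : D | ‖R - 1‖ < δ} with hVdef
  have hVo : IsOpen V := isOpen_lt ((continuous_id.sub continuous_const).norm) continuous_const
  have hVmem : ∀ R : D, R ∈ V ↔ ‖R - 1‖ < δ := fun R => Iff.rfl
  -- continuity of the iterates
  have contρ : ∀ n, ContinuousOn (ρ n) V := by
    intro n
    induction n with
    | zero => exact continuousOn_id.congr fun R _ => hρ0 R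
    | succ n ih =>
      have hcu : ContinuousOn (fun R => u n (1 - ρ n R)) V :=
        (hucont n).comp_continuousOn (continuousOn_const.sub ih)
      have hc1 : ContinuousOn (fun R => 1 + φ (u n (1 - ρ n R)).1) V :=
        continuousOn_const.add (hφ.comp_continuousOn (continuous_fst.comp_continuousOn hcu))
      have hc2 : ContinuousOn (fun R => 1 + ψ (u n (1 - ρ n R)).2) V :=
        continuousOn_const.add (hψ.comp_continuousOn (continuous_snd.comp_continuousOn hcu))
      have hc3 : ContinuousOn (fun R => Ring.inverse (1 + ψ (u n (1 - ρ n R)).2)) V := by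
        intro R hR
        obtain ⟨hA, -, -, -⟩ := main n R hR
        obtain ⟨-, -, ⟨w, hwval, -⟩, -⟩ := hstep n R hA
        have hca : ContinuousAt Ring.inverse ((1 : D) + ψ (u n (1 - ρ n R)).2) := by
          rw [← hwval]
          exact NormedRing.inverse_continuousAt w
        exact ContinuousAt.comp_continuousWithinAt (f := fun R => 1 + ψ (u n (1 - ρ n R)).2) hca (hc2 R hR)
      exact ((hc1.mul ih).mul hc3).congr fun R _ => hρs n R
  have contP : ∀ n, ContinuousOn (P n) V := by
    intro n
    induction n with
    | zero => exact continuousOn_const.congr fun R _ => hP0 R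
    | succ n ih =>
      have hcu : ContinuousOn (fun R => u n (1 - ρ n R)) V :=
        (hucont n).comp_continuousOn (continuousOn_const.sub (contρ n))
      exact ((continuousOn_const.add (continuous_fst.comp_continuousOn hcu)).mul ih).congr
        fun R _ => hPs n R
  have contQ : ∀ n, ContinuousOn (Q n) V := by
    intro n
    induction n with
    | zero => exact continuousOn_const.congr fun R _ => hQ0 R
    | succ n ih =>
      have hcu : ContinuousOn (fun R => u n (1 - ρ n R)) V :=
        (hucont n).comp_continuousOn (continuousOn_const.sub (contρ n))
      exact ((continuousOn_const.add (continuous_snd.comp_continuousOn hcu)).mul ih).congr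
        fun R _ => hQs n R
  -- geometric control of the increments
  have hPnorm : ∀ n (R : D), ‖R - 1‖ < δ → ‖P n R‖ ≤ (3/2)*N := by
    intro n R hR
    obtain ⟨-, -, hPb, -⟩ := main n R hR
    have hq0' : (0:ℝ) ≤ (1/2)^n := by positivity
    have hq1' : ((1:ℝ)/2)^n ≤ 1 := pow_le_one₀ (by norm_num) (by norm_num)
    calc ‖P n R‖ = ‖(1:B) + (P n R - 1)‖ := by rw [add_sub_cancel]
      _ ≤ ‖(1:B)‖ + ‖P n R - 1‖ := norm_add_le _ _
      _ ≤ N + 6*Cb*N*δ*(1-(1/2)^n) := add_le_add hNB hPb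
      _ ≤ (3/2)*N := by nlinarith [mul_nonneg (mul_nonneg (mul_nonneg
          (by positivity : (0:ℝ) ≤ 6*Cb) hN0.le) hδpos.le) (sub_nonneg.2 hq1')]
  have hQnorm : ∀ n (R : D), ‖R - 1‖ < δ → ‖Q n R‖ ≤ (3/2)*N := by
    intro n R hR
    obtain ⟨-, -, -, hQb⟩ := main n R hR
    have hq0' : (0:ℝ) ≤ (1/2)^n := by positivity
    have hq1' : ((1:ℝ)/2)^n ≤ 1 := pow_le_one₀ (by norm_num) (by norm_num)
    calc ‖Q n R‖ = ‖(1:C) + (Q n R - 1)‖ := by rw [add_sub_cancel]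
      _ ≤ ‖(1:C)‖ + ‖Q n R - 1‖ := norm_add_le _ _
      _ ≤ N + 6*Cb*N*δ*(1-(1/2)^n) := add_le_add hNC hQb
      _ ≤ (3/2)*N := by nlinarith [mul_nonneg (mul_nonneg (mul_nonneg
          (by positivity : (0:ℝ) ≤ 6*Cb) hN0.le) hδpos.le) (sub_nonneg.2 hq1')]
  have Pdiff : ∀ (R : D), ‖R - 1‖ < δ → ∀ n, dist (P n R) (P (n+1) R) ≤ (3*Cb*N*δ) * (1/2)^n := by
    intro R hR n
    obtain ⟨hA, -, -, -⟩ := main n R hR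
    obtain ⟨hb, -, -, -⟩ := hstep n R hA
    have hdd : P (n+1) R - P n R = (u n (1 - ρ n R)).1 * P n R := by
      rw [hPs]; noncomm_ring
    calc dist (P n R) (P (n+1) R) = ‖P (n+1) R - P n R‖ := by rw [dist_comm, dist_eq_norm]
      _ = ‖(u n (1 - ρ n R)).1 * P n R‖ := by rw [hdd]
      _ ≤ ‖(u n (1 - ρ n R)).1‖ * ‖P n R‖ := norm_mul_le _ _
      _ ≤ (2*Cb*(δ*(1/2)^n)) * ((3/2)*N) :=
          mul_le_mul hb (hPnorm n R hR) (norm_nonneg _) (by positivity)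
      _ = (3*Cb*N*δ) * (1/2)^n := by ring
  have Qdiff : ∀ (R : D), ‖R - 1‖ < δ → ∀ n, dist (Q n R) (Q (n+1) R) ≤ (3*Cb*N*δ) * (1/2)^n := by
    intro R hR n
    obtain ⟨hA, -, -, -⟩ := main n R hR
    obtain ⟨-, hc, -, -⟩ := hstep n R hA
    have hdd : Q (n+1) R - Q n R = (u n (1 - ρ n R)).2 * Q n R := by
      rw [hQs]; noncomm_ring
    calc dist (Q n R) (Q (n+1) R) = ‖Q (n+1) R - Q n R‖ := by rw [dist_comm, dist_eq_norm]
      _ = ‖(u n (1 - ρ n R)).2 * Q n R‖ := by rw [hdd]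
      _ ≤ ‖(u n (1 - ρ n R)).2‖ * ‖Q n R‖ := norm_mul_le _ _
      _ ≤ (2*Cb*(δ*(1/2)^n)) * ((3/2)*N) :=
          mul_le_mul hc (hQnorm n R hR) (norm_nonneg _) (by positivity)
      _ = (3*Cb*N*δ) * (1/2)^n := by ring
  -- the limits
  have hPLex : ∀ R : D, ∃ L : B, (‖R - 1‖ < δ → Tendsto (fun n => P n R) atTop (𝓝 L)) := by
    intro R
    by_cases hR : ‖R - 1‖ < δ
    · obtain ⟨L, hL⟩ := cauchySeq_tendsto_of_complete
        (cauchySeq_of_le_geometric (1/2) (3*Cb*N*δ) (by norm_num) (Pdiff R hR))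
      exact ⟨L, fun _ => hL⟩
    · exact ⟨1, fun h => absurd h hR⟩
  choose PL hPL using hPLex
  have hQLex : ∀ R : D, ∃ L : C, (‖R - 1‖ < δ → Tendsto (fun n => Q n R) atTop (𝓝 L)) := by
    intro R
    by_cases hR : ‖R - 1‖ < δ
    · obtain ⟨L, hL⟩ := cauchySeq_tendsto_of_complete
        (cauchySeq_of_le_geometric (1/2) (3*Cb*N*δ) (by norm_num) (Qdiff R hR))
      exact ⟨L, fun _ => hL⟩
    · exact ⟨1, fun h => absurd h hR⟩
  choose QL hQL using hQLex
  have hPdist : ∀ (R : D), ‖R - 1‖ < δ → ∀ n, dist (P n R) (PL R) ≤ 6*Cb*N*δ*(1/2)^n := by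
    intro R hR n
    calc dist (P n R) (PL R) ≤ (3*Cb*N*δ) * (1/2)^n / (1 - 1/2) :=
        dist_le_of_le_geometric_of_tendsto (1/2) (3*Cb*N*δ) (by norm_num)
          (Pdiff R hR) (hPL R hR) n
      _ = 6*Cb*N*δ*(1/2)^n := by
          rw [show (1:ℝ) - 1/2 = 1/2 by norm_num]; ring
  have hQdist : ∀ (R : D), ‖R - 1‖ < δ → ∀ n, dist (Q n R) (QL R) ≤ 6*Cb*N*δ*(1/2)^n := by
    intro R hR n
    calc dist (Q n R) (QL R) ≤ (3*Cb*N*δ) * (1/2)^n / (1 - 1/2) :=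
        dist_le_of_le_geometric_of_tendsto (1/2) (3*Cb*N*δ) (by norm_num)
          (Qdiff R hR) (hQL R hR) n
      _ = 6*Cb*N*δ*(1/2)^n := by
          rw [show (1:ℝ) - 1/2 = 1/2 by norm_num]; ring
  have hgeo0 : Tendsto (fun n : ℕ => 6*Cb*N*δ*(1/2)^n) atTop (𝓝 0) := by
    have := (tendsto_pow_atTop_nhds_zero_of_lt_one (by norm_num : (0:ℝ) ≤ 1/2)
      (by norm_num : (1:ℝ)/2 < 1)).const_mul (6*Cb*N*δ)
    simpa using this
  have hPuc : TendstoUniformlyOn (fun n R => P n R) PL atTop V := by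
    rw [Metric.tendstoUniformlyOn_iff]
    intro ε hε
    filter_upwards [hgeo0.eventually_lt_const hε] with n hn R hR
    calc dist (PL R) (P n R) = dist (P n R) (PL R) := dist_comm _ _
      _ ≤ 6*Cb*N*δ*(1/2)^n := hPdist R hR n
      _ < ε := hn
  have hQuc : TendstoUniformlyOn (fun n R => Q n R) QL atTop V := by
    rw [Metric.tendstoUniformlyOn_iff]
    intro ε hε
    filter_upwards [hgeo0.eventually_lt_const hε] with n hn R hR
    calc dist (QL R) (Q n R) = dist (Q n R) (QL R) := dist_comm _ _
      _ ≤ 6*Cb*N*δ*(1/2)^n := hQdist R hR n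
      _ < ε := hn
  have hPLcont : ContinuousOn PL V := hPuc.continuousOn (Eventually.of_forall contP).frequently
  have hQLcont : ContinuousOn QL V := hQuc.continuousOn (Eventually.of_forall contQ).frequently
  -- limit identities
  have keyV : ∀ R : D, ‖R - 1‖ < δ →
      IsUnit (PL R) ∧ IsUnit (QL R) ∧ ψ (QL R) = φ (PL R) * R := by
    intro R hR
    have hρtend : Tendsto (fun n => ρ n R) atTop (𝓝 1) := by
      rw [tendsto_iff_norm_sub_tendsto_zero]
      refine squeeze_zero (fun n => norm_nonneg _) (fun n => (main n R hR).1) ?_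
      have := (tendsto_pow_atTop_nhds_zero_of_lt_one (by norm_num : (0:ℝ) ≤ 1/2)
        (by norm_num : (1:ℝ)/2 < 1)).const_mul δ
      simpa using this
    have hinv : ψ (QL R) = φ (PL R) * R := by
      have h1 : Tendsto (fun n => ρ n R * ψ (Q n R)) atTop (𝓝 (1 * ψ (QL R))) :=
        hρtend.mul ((hψ.tendsto _).comp (hQL R hR))
      have h2 : Tendsto (fun n => ρ n R * ψ (Q n R)) atTop (𝓝 (φ (PL R) * R)) := by
        have h3 : (fun n => ρ n R * ψ (Q n R)) = fun n => φ (P n R) * R :=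
          funext fun n => (main n R hR).2.1
        rw [h3]
        exact ((hφ.tendsto _).comp (hPL R hR)).mul tendsto_const_nhds
      have := tendsto_nhds_unique h1 h2
      rwa [one_mul] at this
    have hPLn : ‖PL R - 1‖ ≤ 1/2 := by
      have ht : Tendsto (fun n => ‖P n R - 1‖) atTop (𝓝 ‖PL R - 1‖) :=
        ((hPL R hR).sub_const 1).norm
      refine le_of_tendsto ht (Eventually.of_forall fun n => ?_)
      have h1 := (main n R hR).2.2.1
      have hq0' : (0:ℝ) ≤ (1/2)^n := by positivity
      have hq1' : ((1:ℝ)/2)^n ≤ 1 := pow_le_one₀ (by norm_num) (by norm_num)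
      nlinarith [mul_nonneg (mul_nonneg (mul_nonneg
        (by positivity : (0:ℝ) ≤ 6*Cb) hN0.le) hδpos.le) hq0']
    have hQLn : ‖QL R - 1‖ ≤ 1/2 := by
      have ht : Tendsto (fun n => ‖Q n R - 1‖) atTop (𝓝 ‖QL R - 1‖) :=
        ((hQL R hR).sub_const 1).norm
      refine le_of_tendsto ht (Eventually.of_forall fun n => ?_)
      have h1 := (main n R hR).2.2.2
      have hq0' : (0:ℝ) ≤ (1/2)^n := by positivity
      have hq1' : ((1:ℝ)/2)^n ≤ 1 := pow_le_one₀ (by norm_num) (by norm_num)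
      nlinarith [mul_nonneg (mul_nonneg (mul_nonneg
        (by positivity : (0:ℝ) ≤ 6*Cb) hN0.le) hδpos.le) hq0']
    refine ⟨?_, ?_, hinv⟩
    · have h' : ‖(1:B) - PL R‖ < 1 := by rw [norm_sub_rev]; linarith
      have := (Units.oneSub _ h').isUnit
      rwa [Units.val_oneSub, sub_sub_cancel] at this
    · have h' : ‖(1:C) - QL R‖ < 1 := by rw [norm_sub_rev]; linarith
      have := (Units.oneSub _ h').isUnit
      rwa [Units.val_oneSub, sub_sub_cancel] at this
  -- assembly
  refine ⟨Units.val ⁻¹' V, hVo.preimage Units.continuous_val, ?_, ?_⟩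
  · show ‖((1:Dˣ):D) - 1‖ < δ
    simpa using hδpos
  · refine ⟨fun R => (if h : IsUnit (PL (R:D)) then h.unit else 1,
      if h : IsUnit (QL (R:D)) then h.unit else 1), ?_, ?_⟩
    · refine ContinuousOn.prodMk ?_ ?_
      · rw [continuousOn_iff_continuous_restrict, Units.continuous_iff]
        have hcv : Continuous fun x : (Units.val ⁻¹' V : Set Dˣ) => PL ((x : Dˣ) : D) :=
          hPLcont.comp_continuous (Units.continuous_val.comp continuous_subtype_val)
            (fun x => x.2)
        constructor
        · refine hcv.congr fun x => ?_
          obtain ⟨hu1, -, -⟩ := keyV ((x : Dˣ) : D) x.2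
          simp [Set.restrict, dif_pos hu1, hu1.unit_spec]
        · have hci : Continuous fun x : (Units.val ⁻¹' V : Set Dˣ) =>
              Ring.inverse (PL ((x : Dˣ) : D)) := by
            rw [continuous_iff_continuousAt]
            intro x
            obtain ⟨hu1, -, -⟩ := keyV ((x : Dˣ) : D) x.2
            have hca : ContinuousAt Ring.inverse (PL ((x : Dˣ) : D)) := by
              have := NormedRing.inverse_continuousAt hu1.unit
              rwa [hu1.unit_spec] at this
            exact ContinuousAt.comp (f := fun x : (Units.val ⁻¹' V : Set Dˣ) => PL ((x : Dˣ) : D)) hca hcv.continuousAt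
          refine hci.congr fun x => ?_
          obtain ⟨hu1, -, -⟩ := keyV ((x : Dˣ) : D) x.2
          simp only [Set.domRestrict_apply, dif_pos hu1]
          rw [← Ring.inverse_unit hu1.unit, hu1.unit_spec]
      · rw [continuousOn_iff_continuous_restrict, Units.continuous_iff]
        have hcv : Continuous fun x : (Units.val ⁻¹' V : Set Dˣ) => QL ((x : Dˣ) : D) :=
          hQLcont.comp_continuous (Units.continuous_val.comp continuous_subtype_val)
            (fun x => x.2)
        constructor
        · refine hcv.congr fun x => ?_
          obtain ⟨-, hu2, -⟩ := keyV ((x : Dˣ) : D) x.2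
          simp [Set.restrict, dif_pos hu2, hu2.unit_spec]
        · have hci : Continuous fun x : (Units.val ⁻¹' V : Set Dˣ) =>
              Ring.inverse (QL ((x : Dˣ) : D)) := by
            rw [continuous_iff_continuousAt]
            intro x
            obtain ⟨-, hu2, -⟩ := keyV ((x : Dˣ) : D) x.2
            have hca : ContinuousAt Ring.inverse (QL ((x : Dˣ) : D)) := by
              have := NormedRing.inverse_continuousAt hu2.unit
              rwa [hu2.unit_spec] at this
            exact ContinuousAt.comp (f := fun x : (Units.val ⁻¹' V : Set Dˣ) => QL ((x : Dˣ) : D)) hca hcv.continuousAt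
          refine hci.congr fun x => ?_
          obtain ⟨-, hu2, -⟩ := keyV ((x : Dˣ) : D) x.2
          simp only [Set.domRestrict_apply, dif_pos hu2]
          rw [← Ring.inverse_unit hu2.unit, hu2.unit_spec]
    · intro R hR
      obtain ⟨hu1, hu2, hinv⟩ := keyV ((R:Dˣ):D) hR
      rw [inv_mul_eq_iff_eq_mul]
      refine Units.ext ?_
      rw [Units.val_mul, Units.coe_map, Units.coe_map]
      simp only [dif_pos hu1, dif_pos hu2, hu1.unit_spec, hu2.unit_spec,
        RingHom.toMonoidHom_eq_coe, MonoidHom.coe_coe, RingHom.coe_coe]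
      exact hinv
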